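/- arXiv:1606.07641 — 4 statements merged into one kernel-verified Lean document; each statement's English description precedes it below -/
import Mathlib

section
/- Fix ξ ∈ (−1,1). The glued profile U^ε(·;ξ) has one-sided derivatives at x = ξ, given by ∂ₓU^ε(ξ⁻;ξ) = −k₁(ε,ξ)/(√2 ε) and ∂ₓU^ε(ξ⁺;ξ) = −k₂(ε,ξ)/(√2 ε), so the jump of its derivative at ξ equals ⟦∂ₓU^ε⟧(ξ) := ∂ₓU^ε(ξ⁺;ξ) − ∂ₓU^ε(ξ⁻;ξ) = (k₁(ε,ξ) − k₂(ε,ξ))/(√2 ε); moreover there exist C > 0, c > 0 and ε₀ > 0 such that |⟦∂ₓU^ε⟧(ξ)| ≤ C·e^{−c/ε} for all ε ∈ (0, ε₀]. In particular the derivative jump tends to 0 as ε → 0⁺. -/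
noncomputable def coth (x : ℝ) : ℝ := Real.cosh x / Real.sinh x

lemma hasDerivAt_tanh_zero : HasDerivAt Real.tanh 1 0 := by
  have h : HasDerivAt (fun x => Real.sinh x / Real.cosh x)
      ((Real.cosh 0 * Real.cosh 0 - Real.sinh 0 * Real.sinh 0) / Real.cosh 0 ^ 2) 0 :=
    (Real.hasDerivAt_sinh 0).div (Real.hasDerivAt_cosh 0) (by simp [Real.cosh_zero])
  have he : Real.tanh = fun x => Real.sinh x / Real.cosh x :=
    funext fun x => Real.tanh_eq_sinh_div_cosh x
  rw [he]
  simpa [Real.cosh_zero, Real.sinh_zero] using h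

lemma coth_sub_one_le {t : ℝ} (ht : 1 ≤ t) : |coth t - 1| ≤ Real.exp (-t) := by
  have ht0 : 0 < t := lt_of_lt_of_le one_pos ht
  have hs : 0 < Real.sinh t := Real.sinh_pos_iff.2 ht0
  have h1 : (1:ℝ) ≤ Real.sinh t :=
    le_trans (le_of_lt (Real.self_lt_sinh_iff.2 one_pos)) (Real.sinh_le_sinh.2 ht)
  have heq : coth t - 1 = Real.exp (-t) / Real.sinh t := by
    rw [coth, div_sub_one (ne_of_gt hs), Real.cosh_sub_sinh]
  rw [heq, abs_of_nonneg (le_of_lt (div_pos (Real.exp_pos _) hs))]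
  calc Real.exp (-t) / Real.sinh t ≤ Real.exp (-t) / 1 :=
        div_le_div_of_nonneg_left (le_of_lt (Real.exp_pos _)) one_pos h1
    _ = Real.exp (-t) := div_one _

lemma glued_hasDerivAt (ξ k ε : ℝ) (hε : 0 < ε) :
    HasDerivAt (fun x => k * Real.tanh ((ξ - x) / (Real.sqrt 2 * ε))) (-k / (Real.sqrt 2 * ε)) ξ := by
  have hs2 : (0:ℝ) < Real.sqrt 2 := Real.sqrt_pos.2 two_pos
  have hne : Real.sqrt 2 * ε ≠ 0 := ne_of_gt (mul_pos hs2 hε)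
  have hin : HasDerivAt (fun x => (ξ - x) / (Real.sqrt 2 * ε)) (-(Real.sqrt 2 * ε)⁻¹) ξ := by
    have : HasDerivAt (fun x : ℝ => (ξ - x) * (Real.sqrt 2 * ε)⁻¹)
        (-1 * (Real.sqrt 2 * ε)⁻¹) ξ := ((hasDerivAt_id ξ).const_sub ξ).mul_const _
    simpa [div_eq_mul_inv, neg_mul] using this
  have hcomp : HasDerivAt (fun x => Real.tanh ((ξ - x) / (Real.sqrt 2 * ε)))
      (1 * -(Real.sqrt 2 * ε)⁻¹) ξ := by
    have h0 : (ξ - ξ) / (Real.sqrt 2 * ε) = 0 := by simp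
    exact (h0 ▸ hasDerivAt_tanh_zero : HasDerivAt Real.tanh 1 ((ξ - ξ) / (Real.sqrt 2 * ε))).comp ξ hin
  have := hcomp.const_mul k
  convert this using 1
  · rfl
  · rfl
  · ring

/-- Fix `ξ ∈ (-1,1)`. The glued profile `U^ε(·;ξ)` has one-sided derivatives at `x = ξ`,
equal to `-k₁(ε)/(√2 ε)` from the left and `-k₂(ε)/(√2 ε)` from the right, so the jump
of the derivative at `ξ` equals `(k₁(ε) - k₂(ε))/(√2 ε)`; moreover there exist
`C, c, ε₀ > 0` with `|jump| ≤ C e^{-c/ε}` for all `ε ∈ (0, ε₀]`, hence the jump tends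
to `0` as `ε → 0⁺`. -/
theorem stmt_5 (ξ : ℝ) (hξ : ξ ∈ Set.Ioo (-1 : ℝ) 1)
    (k₁ k₂ : ℝ → ℝ)
    (hk₁ : ∀ ε : ℝ, k₁ ε = coth ((1 + ξ) / (Real.sqrt 2 * ε)))
    (hk₂ : ∀ ε : ℝ, k₂ ε = coth ((1 - ξ) / (Real.sqrt 2 * ε)))
    (U : ℝ → ℝ → ℝ)
    (hU : ∀ ε x, U ε x = if x ≤ ξ then k₁ ε * Real.tanh ((ξ - x) / (Real.sqrt 2 * ε))
      else k₂ ε * Real.tanh ((ξ - x) / (Real.sqrt 2 * ε))) :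
    (∀ ε : ℝ, 0 < ε →
      HasDerivWithinAt (U ε) (-(k₁ ε) / (Real.sqrt 2 * ε)) (Set.Iic ξ) ξ ∧
      HasDerivWithinAt (U ε) (-(k₂ ε) / (Real.sqrt 2 * ε)) (Set.Ici ξ) ξ ∧
      (-(k₂ ε) / (Real.sqrt 2 * ε)) - (-(k₁ ε) / (Real.sqrt 2 * ε))
        = (k₁ ε - k₂ ε) / (Real.sqrt 2 * ε)) ∧
    (∃ C > (0 : ℝ), ∃ c > (0 : ℝ), ∃ ε₀ > (0 : ℝ), ∀ ε ∈ Set.Ioc (0 : ℝ) ε₀,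
      |(k₁ ε - k₂ ε) / (Real.sqrt 2 * ε)| ≤ C * Real.exp (-c / ε)) ∧
    Filter.Tendsto (fun ε => (k₁ ε - k₂ ε) / (Real.sqrt 2 * ε))
      (nhdsWithin 0 (Set.Ioi 0)) (nhds 0) := by
  obtain ⟨hξ1, hξ2⟩ := hξ
  have hs2 : (0:ℝ) < Real.sqrt 2 := Real.sqrt_pos.2 two_pos
  have hs2sq : Real.sqrt 2 * Real.sqrt 2 = 2 := Real.mul_self_sqrt (by norm_num)
  have habs : |ξ| < 1 := abs_lt.2 ⟨hξ1, hξ2⟩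
  set δ : ℝ := 1 - |ξ| with hδdef
  have hδ : 0 < δ := by simp [hδdef]; linarith
  have hδ1 : δ ≤ 1 + ξ := by
    have := neg_abs_le ξ; simp [hδdef]; linarith
  have hδ2 : δ ≤ 1 - ξ := by
    have := le_abs_self ξ; simp [hδdef]; linarith
  -- the quantitative bound
  have key : ∃ C > (0 : ℝ), ∃ c > (0 : ℝ), ∃ ε₀ > (0 : ℝ), ∀ ε ∈ Set.Ioc (0 : ℝ) ε₀,
      |(k₁ ε - k₂ ε) / (Real.sqrt 2 * ε)| ≤ C * Real.exp (-c / ε) := by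
    refine ⟨Real.sqrt 2 / (δ / (2 * Real.sqrt 2)), by positivity,
      δ / (2 * Real.sqrt 2), by positivity, δ / Real.sqrt 2, by positivity,
      fun ε hε => ?_⟩
    obtain ⟨hε0, hε1⟩ := hε
    set c : ℝ := δ / (2 * Real.sqrt 2) with hc
    have hcpos : 0 < c := by positivity
    have hsε : 0 < Real.sqrt 2 * ε := mul_pos hs2 hε0
    have hεδ : Real.sqrt 2 * ε ≤ δ := by
      rw [mul_comm]; exact (le_div_iff₀ hs2).1 hε1
    have ha1 : 1 ≤ (1 + ξ) / (Real.sqrt 2 * ε) :=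
      (one_le_div hsε).2 (le_trans hεδ hδ1)
    have hb1 : 1 ≤ (1 - ξ) / (Real.sqrt 2 * ε) :=
      (one_le_div hsε).2 (le_trans hεδ hδ2)
    set A : ℝ := Real.exp (-(c / ε)) with hA
    have hApos : 0 < A := Real.exp_pos _
    have hAle : A ≤ ε / c := by
      have h1 : c / ε ≤ Real.exp (c / ε) := by
        have := Real.add_one_le_exp (c / ε); linarith
      have h2 : 0 < c / ε := div_pos hcpos hε0
      have h3 : (Real.exp (c / ε))⁻¹ ≤ (c / ε)⁻¹ := inv_anti₀ h2 h1
      rw [hA, Real.exp_neg]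
      calc (Real.exp (c / ε))⁻¹ ≤ (c / ε)⁻¹ := h3
        _ = ε / c := inv_div c ε
    have h2c : c + c = δ / Real.sqrt 2 := by
      rw [hc, ← add_div, div_eq_div_iff (by positivity) hs2.ne']
      ring
    -- each coth term is close to 1
    have hma : Real.exp (-((1 + ξ) / (Real.sqrt 2 * ε))) ≤ A * A := by
      rw [← Real.exp_add, Real.exp_le_exp, ← neg_add]
      apply neg_le_neg
      rw [← add_div, h2c, div_div]
      gcongr
    have hmb : Real.exp (-((1 - ξ) / (Real.sqrt 2 * ε))) ≤ A * A := by
      rw [← Real.exp_add, Real.exp_le_exp, ← neg_add]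
      apply neg_le_neg
      rw [← add_div, h2c, div_div]
      gcongr
    have hdiff : |k₁ ε - k₂ ε| ≤ 2 * (A * A) := by
      rw [hk₁, hk₂]
      have h1 := coth_sub_one_le ha1
      have h2 := coth_sub_one_le hb1
      have h3 : |coth ((1 + ξ) / (Real.sqrt 2 * ε)) - coth ((1 - ξ) / (Real.sqrt 2 * ε))|
          ≤ |coth ((1 + ξ) / (Real.sqrt 2 * ε)) - 1| + |coth ((1 - ξ) / (Real.sqrt 2 * ε)) - 1| := by
        have := abs_sub (coth ((1 + ξ) / (Real.sqrt 2 * ε)) - 1) (coth ((1 - ξ) / (Real.sqrt 2 * ε)) - 1)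
        simpa using this
      nlinarith [hma, hmb, Real.exp_pos (-((1 + ξ) / (Real.sqrt 2 * ε)))]
    have final : |(k₁ ε - k₂ ε) / (Real.sqrt 2 * ε)| ≤ Real.sqrt 2 / c * A := by
      rw [abs_div, abs_of_pos hsε]
      rw [div_le_iff₀ hsε]
      calc |k₁ ε - k₂ ε| ≤ 2 * (A * A) := hdiff
        _ ≤ 2 * ((ε / c) * A) := by nlinarith [mul_le_mul_of_nonneg_right hAle hApos.le]
        _ = Real.sqrt 2 / c * A * (Real.sqrt 2 * ε) := by
            field_simp
            linear_combination (-1) * hs2sq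
    simpa [neg_div] using final
  refine ⟨fun ε hε => ?_, key, ?_⟩
  · have hd1 := glued_hasDerivAt ξ (k₁ ε) ε hε
    have hd2 := glued_hasDerivAt ξ (k₂ ε) ε hε
    refine ⟨(hd1.hasDerivWithinAt).congr (fun x hx => ?_) (by rw [hU]; simp),
      (hd2.hasDerivWithinAt).congr (fun x hx => ?_) ?_, by ring⟩
    · rw [hU]; simp [Set.mem_Iic.1 hx]
    · rw [hU]
      rcases eq_or_lt_of_le (Set.mem_Ici.1 hx) with h | h
      · simp [← h]
      · rw [if_neg (not_le.2 h)]
    · rw [hU]; simp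
  · obtain ⟨C, hC, c, hcp, ε₀, hε₀, hbound⟩ := key
    refine squeeze_zero_norm' (a := fun ε => C * Real.exp (-c / ε)) ?_ ?_
    · filter_upwards [Ioc_mem_nhdsGT_of_mem (Set.mem_Ico.2 ⟨le_rfl, hε₀⟩)] with ε hε
      rw [Real.norm_eq_abs]; exact hbound ε hε
    · have h1 : Filter.Tendsto (fun ε : ℝ => c * ε⁻¹) (nhdsWithin 0 (Set.Ioi 0)) Filter.atTop :=
        tendsto_inv_nhdsGT_zero.const_mul_atTop hcp
      have h2 : Filter.Tendsto (fun ε : ℝ => -c / ε) (nhdsWithin 0 (Set.Ioi 0)) Filter.atBot := by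
        refine (Filter.tendsto_neg_atTop_atBot.comp h1).congr fun ε => ?_
        simp [Function.comp, neg_div, div_eq_mul_inv]
      have h3 := Real.tendsto_exp_atBot.comp h2
      have h4 := h3.const_mul C
      simpa [Function.comp] using h4
end

section
/- Fix ξ ∈ (−1,1). There exist constants C > 0, c > 0 and ε₀ > 0 such that for every ε ∈ (0, ε₀] and every x ∈ [−1,1] with x ≠ ξ, the pointwise residual of the glued profile satisfies |ε² ∂ₓ²U^ε(x;ξ) + U^ε(x;ξ) − U^ε(x;ξ)³| ≤ C·e^{−c/ε}, where ∂ₓ²U^ε denotes the classical second derivative of U^ε(·;ξ) on each of the two smooth pieces [−1,ξ) and (ξ,1]. -/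
lemma tanh_hasDerivAt (y : ℝ) : HasDerivAt Real.tanh (1 - Real.tanh y ^ 2) y := by
  have hc := Real.cosh_pos y
  have h := (Real.hasDerivAt_sinh y).div (Real.hasDerivAt_cosh y) hc.ne'
  have hfun : Real.tanh = fun x => Real.sinh x / Real.cosh x :=
    funext fun x => Real.tanh_eq_sinh_div_cosh x
  rw [hfun]
  refine h.congr_deriv ?_
  simp only []
  field_simp

lemma abs_tanh_le_one (y : ℝ) : |Real.tanh y| ≤ 1 := by
  have hc := Real.cosh_pos y
  rw [Real.tanh_eq_sinh_div_cosh, abs_div, abs_of_pos hc, div_le_one hc]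
  nlinarith [Real.cosh_sq_sub_sinh_sq y, sq_abs (Real.sinh y), abs_nonneg (Real.sinh y)]

lemma coth_exp_bound {a : ℝ} (ha : 1 ≤ a) :
    Real.cosh a / Real.sinh a ^ 3 ≤ 64 * Real.exp (-(2 * a)) := by
  have hE : (2 : ℝ) ≤ Real.exp a := by
    have h1 : (2 : ℝ) ≤ Real.exp 1 := by nlinarith [Real.add_one_le_exp 1]
    exact h1.trans (Real.exp_le_exp.2 ha)
  have hEpos : 0 < Real.exp a := Real.exp_pos a
  have hinv : Real.exp (-a) * Real.exp a = 1 := by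
    rw [← Real.exp_add]; simp
  have hsin : Real.exp a / 4 ≤ Real.sinh a := by
    rw [Real.sinh_eq]; nlinarith
  have hcos : Real.cosh a ≤ Real.exp a := by
    rw [Real.cosh_eq]; nlinarith
  have hspos : 0 < Real.sinh a := Real.sinh_pos_iff.2 (by linarith)
  have hE2 : Real.exp (-(2 * a)) = 1 / Real.exp a ^ 2 := by
    rw [Real.exp_neg, two_mul, Real.exp_add]; ring
  rw [hE2, mul_one_div, div_le_div_iff₀ (by positivity) (by positivity)]
  have h3 : (Real.exp a / 4) ^ 3 ≤ Real.sinh a ^ 3 :=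
    pow_le_pow_left₀ (by positivity) hsin 3
  nlinarith [sq_nonneg (Real.exp a), hEpos.le]

lemma residual_bound (ξ k ε a : ℝ) (hε : ε ≠ 0) (ha : 1 ≤ a)
    (hk : k = Real.cosh a / Real.sinh a) (x : ℝ) :
    |ε ^ 2 * deriv (deriv (fun x => k * Real.tanh ((ξ - x) / (Real.sqrt 2 * ε)))) x
      + k * Real.tanh ((ξ - x) / (Real.sqrt 2 * ε))
      - (k * Real.tanh ((ξ - x) / (Real.sqrt 2 * ε))) ^ 3|
    ≤ 64 * Real.exp (-(2 * a)) := by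
  have hs2 : Real.sqrt 2 * ε ≠ 0 := by
    have : (0:ℝ) < Real.sqrt 2 := by positivity
    exact mul_ne_zero this.ne' hε
  set s : ℝ := (Real.sqrt 2 * ε)⁻¹ with hs
  -- derivative of the inner function
  have hg : ∀ z : ℝ, HasDerivAt (fun x => (ξ - x) / (Real.sqrt 2 * ε)) (-s) z := by
    intro z
    have h1 : HasDerivAt (fun x : ℝ => ξ - x) (-1) z := (hasDerivAt_id z).const_sub ξ
    have := h1.div_const (Real.sqrt 2 * ε)
    simpa [hs, div_eq_mul_inv, neg_mul] using this
  have D1 : ∀ z : ℝ, HasDerivAt (fun x => k * Real.tanh ((ξ - x) / (Real.sqrt 2 * ε)))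
      (-(k * s) * (1 - Real.tanh ((ξ - z) / (Real.sqrt 2 * ε)) ^ 2)) z := by
    intro z
    have := ((tanh_hasDerivAt ((ξ - z) / (Real.sqrt 2 * ε))).comp z (hg z)).const_mul k
    refine this.congr_deriv ?_
    ring
  have hd1 : deriv (fun x => k * Real.tanh ((ξ - x) / (Real.sqrt 2 * ε)))
      = fun z => -(k * s) * (1 - Real.tanh ((ξ - z) / (Real.sqrt 2 * ε)) ^ 2) :=
    funext fun z => (D1 z).deriv
  set T : ℝ := Real.tanh ((ξ - x) / (Real.sqrt 2 * ε)) with hT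
  have D2 : HasDerivAt (fun z => -(k * s) * (1 - Real.tanh ((ξ - z) / (Real.sqrt 2 * ε)) ^ 2))
      (-2 * k * s ^ 2 * T * (1 - T ^ 2)) x := by
    have hp : HasDerivAt (fun z => Real.tanh ((ξ - z) / (Real.sqrt 2 * ε)) ^ 2)
        ((2 : ℕ) * T ^ 1 * ((1 - T ^ 2) * -s)) x :=
      by have := (((tanh_hasDerivAt ((ξ - x) / (Real.sqrt 2 * ε))).comp x (hg x))).pow 2; exact this
    have := (hp.const_sub 1).const_mul (-(k * s))
    refine this.congr_deriv ?_
    push_cast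
    ring
  have hdd : deriv (deriv (fun x => k * Real.tanh ((ξ - x) / (Real.sqrt 2 * ε)))) x
      = -2 * k * s ^ 2 * T * (1 - T ^ 2) := by
    rw [hd1]; exact D2.deriv
  have hssq : s ^ 2 = 1 / (2 * ε ^ 2) := by
    rw [hs, inv_pow, mul_pow, Real.sq_sqrt (by norm_num : (0:ℝ) ≤ 2), one_div]
  have key : ε ^ 2 * (-2 * k * s ^ 2 * T * (1 - T ^ 2)) + k * T - (k * T) ^ 3
      = k * (1 - k ^ 2) * T ^ 3 := by
    rw [hssq]; field_simp; ring
  rw [hdd, key]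
  -- now bound |k (1 - k²) T³|
  have hspos : 0 < Real.sinh a := Real.sinh_pos_iff.2 (by linarith)
  have hcpos : 0 < Real.cosh a := Real.cosh_pos a
  have hka : k * (1 - k ^ 2) = -(Real.cosh a / Real.sinh a ^ 3) := by
    rw [hk]
    field_simp
    linear_combination (-1) * Real.cosh_sq_sub_sinh_sq a
  have hTle : |T| ≤ 1 := abs_tanh_le_one _
  have habs : |k * (1 - k ^ 2) * T ^ 3| ≤ Real.cosh a / Real.sinh a ^ 3 := by
    rw [abs_mul, hka, abs_neg, abs_of_pos (by positivity)]
    have : |T ^ 3| ≤ 1 := by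
      rw [abs_pow]; exact pow_le_one₀ (abs_nonneg T) hTle
    exact mul_le_of_le_one_right (by positivity) this
  exact habs.trans (coth_exp_bound ha)

/-- Fix `ξ ∈ (-1,1)`. There exist `C, c, ε₀ > 0` such that for every `ε ∈ (0, ε₀]` and
every `x ∈ [-1,1]` with `x ≠ ξ`, the pointwise residual of the glued profile satisfies
`|ε² ∂ₓ²U^ε + U^ε - (U^ε)³| ≤ C e^{-c/ε}`, where the second derivative is the classical
one on each of the two smooth pieces `[-1,ξ)` and `(ξ,1]` (represented by the globally
smooth functions `U₁, U₂` which coincide with `U^ε` there). -/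
theorem stmt_6 (ξ : ℝ) (hξ : ξ ∈ Set.Ioo (-1 : ℝ) 1)
    (k₁ k₂ : ℝ → ℝ)
    (hk₁ : ∀ ε : ℝ, k₁ ε = coth ((1 + ξ) / (Real.sqrt 2 * ε)))
    (hk₂ : ∀ ε : ℝ, k₂ ε = coth ((1 - ξ) / (Real.sqrt 2 * ε)))
    (U₁ U₂ : ℝ → ℝ → ℝ)
    (hU₁ : ∀ ε x, U₁ ε x = k₁ ε * Real.tanh ((ξ - x) / (Real.sqrt 2 * ε)))
    (hU₂ : ∀ ε x, U₂ ε x = k₂ ε * Real.tanh ((ξ - x) / (Real.sqrt 2 * ε))) :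
    ∃ C > (0 : ℝ), ∃ c > (0 : ℝ), ∃ ε₀ > (0 : ℝ), ∀ ε ∈ Set.Ioc (0 : ℝ) ε₀,
      (∀ x ∈ Set.Ico (-1 : ℝ) ξ,
        |ε ^ 2 * deriv (deriv (U₁ ε)) x + U₁ ε x - (U₁ ε x) ^ 3|
          ≤ C * Real.exp (-c / ε)) ∧
      (∀ x ∈ Set.Ioc ξ (1 : ℝ),
        |ε ^ 2 * deriv (deriv (U₂ ε)) x + U₂ ε x - (U₂ ε x) ^ 3|
          ≤ C * Real.exp (-c / ε)) := by
  obtain ⟨hξ1, hξ2⟩ := hξ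
  set m : ℝ := min (1 + ξ) (1 - ξ) with hm
  have hm1 : m ≤ 1 + ξ := min_le_left _ _
  have hm2 : m ≤ 1 - ξ := min_le_right _ _
  have hmpos : 0 < m := lt_min (by linarith) (by linarith)
  refine ⟨64, by norm_num, m, hmpos, m / 2, by positivity, ?_⟩
  intro ε hε
  obtain ⟨hε0, hεm⟩ := hε
  have hεne : ε ≠ 0 := hε0.ne'
  have hsqrt2 : (1 : ℝ) ≤ Real.sqrt 2 := by
    nlinarith [Real.sq_sqrt (by norm_num : (0:ℝ) ≤ 2), Real.sqrt_nonneg 2]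
  have hsqrt2' : Real.sqrt 2 ≤ 2 := by
    nlinarith [Real.sq_sqrt (by norm_num : (0:ℝ) ≤ 2), Real.sqrt_nonneg 2]
  have hden : 0 < Real.sqrt 2 * ε := by positivity
  -- generic helper for each piece
  have main : ∀ b : ℝ, m ≤ b → ∀ x : ℝ,
      |ε ^ 2 * deriv (deriv (fun x => coth (b / (Real.sqrt 2 * ε)) *
          Real.tanh ((ξ - x) / (Real.sqrt 2 * ε)))) x
        + coth (b / (Real.sqrt 2 * ε)) * Real.tanh ((ξ - x) / (Real.sqrt 2 * ε))
        - (coth (b / (Real.sqrt 2 * ε)) * Real.tanh ((ξ - x) / (Real.sqrt 2 * ε))) ^ 3|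
      ≤ 64 * Real.exp (-m / ε) := by
    intro b hb x
    set a : ℝ := b / (Real.sqrt 2 * ε) with hadef
    have hbpos : 0 < b := lt_of_lt_of_le hmpos hb
    have ha1 : 1 ≤ a := by
      rw [hadef, le_div_iff₀ hden]
      nlinarith
    have hres := residual_bound ξ (coth a) ε a hεne ha1 rfl x
    refine hres.trans ?_
    have hmono : -(2 * a) ≤ -m / ε := by
      rw [neg_div, neg_le_neg_iff, div_le_iff₀ hε0, hadef]
      have heq : 2 * (b / (Real.sqrt 2 * ε)) * ε = 2 * b / Real.sqrt 2 := by
        field_simp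
      rw [heq, le_div_iff₀ (by positivity : (0:ℝ) < Real.sqrt 2)]
      nlinarith
    exact mul_le_mul_of_nonneg_left (Real.exp_le_exp.2 hmono) (by norm_num)
  constructor
  · intro x _
    have hU : U₁ ε = fun x => coth ((1 + ξ) / (Real.sqrt 2 * ε)) *
        Real.tanh ((ξ - x) / (Real.sqrt 2 * ε)) := by
      funext z; rw [hU₁ ε z, hk₁ ε]
    rw [hU]
    exact main (1 + ξ) hm1 x
  · intro x _
    have hU : U₂ ε = fun x => coth ((1 - ξ) / (Real.sqrt 2 * ε)) *
        Real.tanh ((ξ - x) / (Real.sqrt 2 * ε)) := by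
      funext z; rw [hU₂ ε z, hk₂ ε]
    rw [hU]
    exact main (1 - ξ) hm2 x
end

section
/- Let J ⊆ ℝ be an interval, ξ̄ ∈ J, β > 0, and θ : J → ℝ a function satisfying (ξ − ξ̄)·θ(ξ) ≤ −β·(ξ − ξ̄)² for every ξ ∈ J. Let δ ≥ 0 and γ > 0, let r, ρ : [0,∞) → ℝ be continuous with |r(t)| ≤ 1/2 and |ρ(t)| ≤ δ·e^{−γt} for all t ≥ 0, and let ξ : [0,∞) → J be differentiable with ξ'(t) = θ(ξ(t))·(1 + r(t)) + ρ(t) for all t ≥ 0. Then for every t ≥ 0, |ξ(t) − ξ̄| ≤ |ξ(0) − ξ̄|·e^{−βt/2} + δ·t·e^{−min(γ, β/2)·t}. In particular ξ(t) converges exponentially fast to ξ̄ as t → ∞. -/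
/-- Perturbed interface equation: let `J ⊆ ℝ` be an interval, `ξ̄ ∈ J`, `β > 0`, and
`θ` satisfy `(ξ - ξ̄) θ(ξ) ≤ -β (ξ - ξ̄)²` on `J`. Let `δ ≥ 0`, `γ > 0`, and let
`r, ρ : [0,∞) → ℝ` be continuous with `|r| ≤ 1/2` and `|ρ(t)| ≤ δ e^{-γ t}`. If
`ξ : [0,∞) → J` is differentiable with `ξ' = θ(ξ)(1 + r) + ρ`, then for all `t ≥ 0`,
`|ξ(t) - ξ̄| ≤ |ξ(0) - ξ̄| e^{-βt/2} + δ t e^{-min(γ, β/2) t}`; in particular `ξ(t)`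
converges exponentially fast to `ξ̄`. -/
theorem stmt_15 (J : Set ℝ) (hJ : J.OrdConnected) (ξbar : ℝ) (hξbar : ξbar ∈ J)
    (β : ℝ) (hβ : 0 < β) (θ : ℝ → ℝ)
    (hθ : ∀ ζ ∈ J, (ζ - ξbar) * θ ζ ≤ -β * (ζ - ξbar) ^ 2)
    (δ γ : ℝ) (hδ : 0 ≤ δ) (hγ : 0 < γ)
    (r ρ : ℝ → ℝ)
    (hrc : ContinuousOn r (Set.Ici 0)) (hρc : ContinuousOn ρ (Set.Ici 0))
    (hr : ∀ t : ℝ, 0 ≤ t → |r t| ≤ 1 / 2)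
    (hρ : ∀ t : ℝ, 0 ≤ t → |ρ t| ≤ δ * Real.exp (-γ * t))
    (ξ : ℝ → ℝ) (hmem : ∀ t : ℝ, 0 ≤ t → ξ t ∈ J)
    (hode : ∀ t : ℝ, 0 ≤ t →
      HasDerivWithinAt ξ (θ (ξ t) * (1 + r t) + ρ t) (Set.Ici 0) t) :
    ∀ t : ℝ, 0 ≤ t →
      |ξ t - ξbar| ≤ |ξ 0 - ξbar| * Real.exp (-(β / 2) * t)
        + δ * t * Real.exp (-(min γ (β / 2)) * t) := by
  intro t ht
  have hmγ : min γ (β / 2) ≤ γ := min_le_left _ _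
  have hmβ : min γ (β / 2) ≤ β / 2 := min_le_right _ _
  obtain ⟨m, hm⟩ : ∃ m, m = min γ (β / 2) := ⟨_, rfl⟩
  rw [← hm] at hmγ hmβ ⊢
  obtain ⟨a, ha⟩ : ∃ a, a = |ξ 0 - ξbar| := ⟨_, rfl⟩
  rw [← ha]
  have ha0 : 0 ≤ a := ha ▸ abs_nonneg _
  suffices H : ∀ ε > (0:ℝ), |ξ t - ξbar| ≤
      a * Real.exp (-(β / 2) * t) + δ * t * Real.exp (-m * t) + ε by
    exact le_of_forall_pos_le_add H
  intro ε hε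
  obtain ⟨Cε, hCεdef⟩ : ∃ F : ℝ → ℝ,
      F = fun x => a * Real.exp (-(β / 2) * x) + δ * x * Real.exp (-m * x) + ε := ⟨_, rfl⟩
  obtain ⟨Cε', hCε'def⟩ : ∃ F : ℝ → ℝ,
      F = fun x => a * (Real.exp (-(β / 2) * x) * (-(β / 2)))
        + (δ * Real.exp (-m * x) + δ * x * (Real.exp (-m * x) * (-m))) := ⟨_, rfl⟩
  have hCεd : ∀ x : ℝ, HasDerivAt Cε (Cε' x) x := by
    intro x
    rw [hCεdef, hCε'def]
    have h1 : HasDerivAt (fun y : ℝ => -(β / 2) * y) (-(β / 2)) x := by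
      simpa using (hasDerivAt_id x).const_mul (-(β / 2))
    have h2 : HasDerivAt (fun y : ℝ => -m * y) (-m) x := by
      simpa using (hasDerivAt_id x).const_mul (-m)
    have hA : HasDerivAt (fun y : ℝ => a * Real.exp (-(β / 2) * y))
        (a * (Real.exp (-(β / 2) * x) * (-(β / 2)))) x := (h1.exp).const_mul a
    have hδx : HasDerivAt (fun y : ℝ => δ * y) δ x := by
      simpa using (hasDerivAt_id x).const_mul δ
    have hB : HasDerivAt (fun y : ℝ => δ * y * Real.exp (-m * y))
        (δ * Real.exp (-m * x) + δ * x * (Real.exp (-m * x) * (-m))) x := hδx.mul h2.exp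
    exact (hA.add hB).add_const ε
  have hCεpos : ∀ x, 0 ≤ x → 0 < Cε x := by
    intro x hx
    rw [hCεdef]
    have e1 := (Real.exp_pos (-(β / 2) * x)).le
    have e2 := (Real.exp_pos (-m * x)).le
    have : 0 ≤ a * Real.exp (-(β / 2) * x) := mul_nonneg ha0 e1
    have : 0 ≤ δ * x * Real.exp (-m * x) := mul_nonneg (mul_nonneg hδ hx) e2
    dsimp only
    linarith
  have hξc : ContinuousOn ξ (Set.Icc 0 t) := fun x hx =>
    ((hode x hx.1).continuousWithinAt).mono (Set.Icc_subset_Ici_self)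
  have hf : ContinuousOn (fun x => (ξ x - ξbar) ^ 2) (Set.Icc 0 t) :=
    (hξc.sub continuousOn_const).pow 2
  have hf' : ∀ x ∈ Set.Ico 0 t,
      HasDerivWithinAt (fun x => (ξ x - ξbar) ^ 2)
        (2 * (ξ x - ξbar) * (θ (ξ x) * (1 + r x) + ρ x)) (Set.Ici x) x := by
    intro x hx
    have h := ((hode x hx.1).mono (Set.Ici_subset_Ici.2 hx.1)).sub_const ξbar
    have := h.fun_pow 2
    simpa [mul_comm, mul_assoc, mul_left_comm] using this
  have hinit : (ξ 0 - ξbar) ^ 2 ≤ (Cε 0) ^ 2 := by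
    have h0 : (ξ 0 - ξbar) ^ 2 = a ^ 2 := by rw [ha, sq_abs]
    have hc0 : Cε 0 = a + ε := by rw [hCεdef]; simp
    rw [h0, hc0]
    nlinarith
  have bound : ∀ x ∈ Set.Ico 0 t, (ξ x - ξbar) ^ 2 = (Cε x) ^ 2 →
      2 * (ξ x - ξbar) * (θ (ξ x) * (1 + r x) + ρ x) < 2 * Cε x ^ 1 * Cε' x := by
    intro x hx hcontact
    have hx0 : (0:ℝ) ≤ x := hx.1
    have hCx : 0 < Cε x := hCεpos x hx0
    obtain ⟨v, hv⟩ : ∃ v, ξ x - ξbar = v := ⟨_, rfl⟩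
    rw [hv] at hcontact ⊢
    have habs : |v| = Cε x := by
      have h1 : |v| ^ 2 = (Cε x) ^ 2 := by rw [sq_abs]; exact hcontact
      nlinarith [abs_nonneg v]
    have e1pos : 0 < Real.exp (-(β / 2) * x) := Real.exp_pos _
    have e2pos : 0 < Real.exp (-m * x) := Real.exp_pos _
    have hθx : v * θ (ξ x) ≤ -β * v ^ 2 := hv ▸ hθ (ξ x) (hmem x hx0)
    have hrx : 1 / 2 ≤ 1 + r x := by
      have := abs_le.1 (hr x hx0)
      linarith [this.1]
    have hvθ0 : v * θ (ξ x) ≤ 0 := le_trans hθx (by nlinarith [sq_nonneg v])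
    have hvT : v * θ (ξ x) * (1 + r x) ≤ -(β / 2) * v ^ 2 := by
      have h1 : v * θ (ξ x) * (1 + r x) ≤ v * θ (ξ x) * (1 / 2) :=
        mul_le_mul_of_nonpos_left hrx hvθ0
      linarith
    have hvP : v * ρ x ≤ Cε x * (δ * Real.exp (-γ * x)) := by
      calc v * ρ x ≤ |v * ρ x| := le_abs_self _
        _ = |v| * |ρ x| := abs_mul _ _
        _ ≤ Cε x * (δ * Real.exp (-γ * x)) := by
            rw [habs]; exact mul_le_mul_of_nonneg_left (hρ x hx0) hCx.le
    have heγ : δ * Real.exp (-γ * x) ≤ δ * Real.exp (-m * x) := by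
      apply mul_le_mul_of_nonneg_left _ hδ
      apply Real.exp_le_exp.2
      nlinarith
    have hvP2 : v * ρ x ≤ Cε x * (δ * Real.exp (-m * x)) :=
      le_trans hvP (mul_le_mul_of_nonneg_left heγ hCx.le)
    have hinner : -(β / 2) * Cε x + δ * Real.exp (-m * x) < Cε' x := by
      have heq : Cε' x + (β / 2) * Cε x - δ * Real.exp (-m * x)
          = (β / 2 - m) * (δ * x * Real.exp (-m * x)) + (β / 2) * ε := by
        rw [hCεdef, hCε'def]; dsimp only; ring
      have h1 : 0 ≤ (β / 2 - m) * (δ * x * Real.exp (-m * x)) :=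
        mul_nonneg (by linarith) (mul_nonneg (mul_nonneg hδ hx0) e2pos.le)
      have h2 : 0 < (β / 2) * ε := by positivity
      linarith
    have hfin : 2 * Cε x * (-(β / 2) * Cε x + δ * Real.exp (-m * x))
        < 2 * Cε x * Cε' x := by
      apply mul_lt_mul_of_pos_left hinner
      linarith
    calc 2 * v * (θ (ξ x) * (1 + r x) + ρ x)
        = 2 * (v * θ (ξ x) * (1 + r x)) + 2 * (v * ρ x) := by ring
      _ ≤ 2 * (-(β / 2) * v ^ 2) + 2 * (Cε x * (δ * Real.exp (-m * x))) := by linarith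
      _ = 2 * Cε x * (-(β / 2) * Cε x + δ * Real.exp (-m * x)) := by rw [hcontact]; ring
      _ < 2 * Cε x * Cε' x := hfin
      _ = 2 * Cε x ^ 1 * Cε' x := by ring
  have key := image_le_of_deriv_right_lt_deriv_boundary (f := fun x => (ξ x - ξbar) ^ 2)
    (f' := fun x => 2 * (ξ x - ξbar) * (θ (ξ x) * (1 + r x) + ρ x))
    (B := fun x => (Cε x) ^ 2) (B' := fun x => 2 * Cε x ^ 1 * Cε' x)
    hf hf' hinit (fun x => (hCεd x).pow 2) bound (Set.right_mem_Icc.2 ht)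
  have hCt : 0 < Cε t := hCεpos t ht
  have hfinal : |ξ t - ξbar| ≤ Cε t := by
    have h1 : |ξ t - ξbar| ^ 2 ≤ (Cε t) ^ 2 := by rw [sq_abs]; exact key
    nlinarith [abs_nonneg (ξ t - ξbar)]
  rw [hCεdef] at hfinal
  exact hfinal
end

section
/- Let H be a real Hilbert space with inner product ⟨·,·⟩ and let T > 0. Let ξ : [0,T] → ℝ and v : [0,T] → H be differentiable, let Ψ : ℝ → H and U : ℝ → H be continuously differentiable, and let w, F, Q : [0,T] → H be continuous functions such that for all t ∈ [0,T]: (i) v'(t) = w(t) + F(t) − ξ'(t)·U'(ξ(t)) + Q(t); (ii) ⟨Ψ(ξ(t)), w(t)⟩ = 0; (iii) ⟨Ψ(ξ(t)), v(t)⟩ = 0. Then for every t ∈ [0,T] the interface equation ( ⟨Ψ(ξ(t)), U'(ξ(t))⟩ − ⟨Ψ'(ξ(t)), v(t)⟩ )·ξ'(t) = ⟨Ψ(ξ(t)), F(t) + Q(t)⟩ holds. -/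
/-- Derivation of the interface equation by the projection method: in a real Hilbert
space `H`, if `v' = w + F - ξ' • U'(ξ) + Q` on `[0,T]`, `⟨Ψ(ξ(t)), w(t)⟩ = 0` and
`⟨Ψ(ξ(t)), v(t)⟩ = 0` on `[0,T]`, with `Ψ, U : ℝ → H` continuously differentiable, then
`(⟨Ψ(ξ), U'(ξ)⟩ - ⟨Ψ'(ξ), v⟩) ξ' = ⟨Ψ(ξ), F + Q⟩` on `[0,T]`. -/
theorem stmt_16 {H : Type*} [NormedAddCommGroup H] [InnerProductSpace ℝ H]
    [CompleteSpace H]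
    (T : ℝ) (hT : 0 < T)
    (ξ ξ' : ℝ → ℝ) (v : ℝ → H) (Ψ Ψ' U U' : ℝ → H)
    (hΨ : ∀ s : ℝ, HasDerivAt Ψ (Ψ' s) s) (hΨ'c : Continuous Ψ')
    (hUd : ∀ s : ℝ, HasDerivAt U (U' s) s) (hU'c : Continuous U')
    (hξ : ∀ t ∈ Set.Icc (0 : ℝ) T, HasDerivWithinAt ξ (ξ' t) (Set.Icc 0 T) t)
    (w F Q : ℝ → H)
    (hwc : ContinuousOn w (Set.Icc 0 T)) (hFc : ContinuousOn F (Set.Icc 0 T))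
    (hQc : ContinuousOn Q (Set.Icc 0 T))
    (hv : ∀ t ∈ Set.Icc (0 : ℝ) T,
      HasDerivWithinAt v (w t + F t - ξ' t • U' (ξ t) + Q t) (Set.Icc 0 T) t)
    (horth : ∀ t ∈ Set.Icc (0 : ℝ) T, (inner ℝ (Ψ (ξ t)) (w t) : ℝ) = 0)
    (hconstr : ∀ t ∈ Set.Icc (0 : ℝ) T, (inner ℝ (Ψ (ξ t)) (v t) : ℝ) = 0) :
    ∀ t ∈ Set.Icc (0 : ℝ) T,
      ((inner ℝ (Ψ (ξ t)) (U' (ξ t)) : ℝ) - (inner ℝ (Ψ' (ξ t)) (v t) : ℝ)) * ξ' t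
        = (inner ℝ (Ψ (ξ t)) (F t + Q t) : ℝ) := by
  intro t ht
  have hUD : UniqueDiffWithinAt ℝ (Set.Icc (0:ℝ) T) t :=
    (uniqueDiffOn_Icc hT) t ht
  -- derivative of t ↦ Ψ (ξ t)
  have hΨξ : HasDerivWithinAt (fun s => Ψ (ξ s)) (ξ' t • Ψ' (ξ t))
      (Set.Icc 0 T) t := (hΨ (ξ t)).scomp_hasDerivWithinAt t (hξ t ht)
  set g : ℝ → ℝ := fun s => (inner ℝ (Ψ (ξ s)) (v s) : ℝ) with hg
  have h1 : HasDerivWithinAt g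
      ((inner ℝ (Ψ (ξ t)) (w t + F t - ξ' t • U' (ξ t) + Q t) : ℝ)
        + (inner ℝ (ξ' t • Ψ' (ξ t)) (v t) : ℝ)) (Set.Icc 0 T) t :=
    hΨξ.inner ℝ (hv t ht)
  have h2 : HasDerivWithinAt g 0 (Set.Icc 0 T) t :=
    (hasDerivWithinAt_const t _ (0:ℝ)).congr
      (fun s hs => hconstr s hs) (hconstr t ht)
  have heq : (inner ℝ (Ψ (ξ t)) (w t + F t - ξ' t • U' (ξ t) + Q t) : ℝ)
        + (inner ℝ (ξ' t • Ψ' (ξ t)) (v t) : ℝ) = 0 := by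
    have := h1.derivWithin hUD
    rw [h2.derivWithin hUD] at this
    linarith
  have h0 := horth t ht
  simp only [inner_add_left, inner_add_right, inner_sub_right, inner_smul_left,
    inner_smul_right, RCLike.inner_apply, conj_trivial, h0] at heq ⊢
  ring_nf at heq ⊢
  linarith
end
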